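/- Consider χ̇ = M_0 ∇H_d(χ) with M_0 = [[−k_d, −1, 0],[1, −1/R, −k_i],[0, k_i, 0]] and H_d(χ) = ½(χ₁²/L + χ₂²/C + χ₃²/k_i), with k_d, k_i, R, L, C > 0. Then (a) dH_d/dt = −k_d χ₁²/L² − χ₂²/(RC²) ≤ 0 along solutions, and (b) the largest invariant set contained in {χ : χ₁ = χ₂ = 0} is {0}; hence by LaSalle's invariance principle the origin is globally asymptotically stable. -/

import Mathlib

set_option maxHeartbeats 1000000


open Filter

/-- `H_d(χ) = ½(χ₁²/L + χ₂²/C + χ₃²/k_i)`. -/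
noncomputable def Hd (L C ki : ℝ) (c1 c2 c3 : ℝ) : ℝ :=
  (c1 ^ 2 / L + c2 ^ 2 / C + c3 ^ 2 / ki) / 2

/-- `χ` solves `χ̇ = M₀ ∇H_d(χ)` with
`M₀ = [[−k_d, −1, 0],[1, −1/R, −k_i],[0, k_i, 0]]` and `∇H_d = (χ₁/L, χ₂/C, χ₃/k_i)`. -/
def IsSol13 (kd ki R L C : ℝ) (c1 c2 c3 : ℝ → ℝ) : Prop :=
  (∀ t, HasDerivAt c1 (-kd * (c1 t / L) - c2 t / C) t) ∧
  (∀ t, HasDerivAt c2 (c1 t / L - (1 / R) * (c2 t / C) - ki * (c3 t / ki)) t) ∧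
  (∀ t, HasDerivAt c3 (ki * (c2 t / C)) t)

lemma hd_deriv {kd ki R L C : ℝ} (hki : ki ≠ 0) (hL : L ≠ 0) (hR : R ≠ 0) (hC : C ≠ 0)
    {c1 c2 c3 : ℝ → ℝ} (h : IsSol13 kd ki R L C c1 c2 c3) (t : ℝ) :
    HasDerivAt (fun s => Hd L C ki (c1 s) (c2 s) (c3 s))
      (-kd * (c1 t) ^ 2 / L ^ 2 - (c2 t) ^ 2 / (R * C ^ 2)) t := by
  obtain ⟨h1, h2, h3⟩ := h
  have hd : HasDerivAt (fun s => Hd L C ki (c1 s) (c2 s) (c3 s))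
      ((((2 : ℕ) * c1 t ^ 1 * (-kd * (c1 t / L) - c2 t / C)) / L
        + ((2 : ℕ) * c2 t ^ 1 * (c1 t / L - (1 / R) * (c2 t / C) - ki * (c3 t / ki))) / C
        + ((2 : ℕ) * c3 t ^ 1 * (ki * (c2 t / C))) / ki) / 2) t := by
    exact ((((h1 t).pow 2).div_const L |>.add (((h2 t).pow 2).div_const C) |>.add
      (((h3 t).pow 2).div_const ki)).div_const 2)
  convert hd using 1
  field_simp
  ring

lemma norm3_sq_le (x y z : ℝ) : ‖(x, y, z)‖ ^ 2 ≤ x ^ 2 + y ^ 2 + z ^ 2 := by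
  have h : ‖(x, y, z)‖ = max |x| (max |y| |z|) := by
    simp [Prod.norm_def, Real.norm_eq_abs]
  rw [h]
  rcases max_choice |x| (max |y| |z|) with h1 | h1 <;> rw [h1]
  · nlinarith [sq_nonneg y, sq_nonneg z, sq_abs x]
  · rcases max_choice |y| |z| with h2 | h2 <;> rw [h2] <;>
      nlinarith [sq_nonneg x, sq_nonneg y, sq_nonneg z, sq_abs y, sq_abs z]

lemma comp_sq_le_norm3 (x y z : ℝ) :
    x ^ 2 ≤ ‖(x, y, z)‖ ^ 2 ∧ y ^ 2 ≤ ‖(x, y, z)‖ ^ 2 ∧ z ^ 2 ≤ ‖(x, y, z)‖ ^ 2 := by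
  have h : ‖(x, y, z)‖ = max |x| (max |y| |z|) := by
    simp [Prod.norm_def, Real.norm_eq_abs]
  rw [h]
  refine ⟨?_, ?_, ?_⟩ <;>
  · rw [← sq_abs]
    apply pow_le_pow_left₀ (abs_nonneg _)
    simp [le_max_iff, le_refl]

lemma le_by_num {A B N d : ℝ} (hd : 0 < d) (hN : 0 ≤ N) (h : B - A = N / d) : A ≤ B := by
  have h2 : 0 ≤ B - A := h ▸ div_nonneg hN hd.le
  linarith

theorem stmt13 (kd ki R L C : ℝ) (hkd : 0 < kd) (hki : 0 < ki) (hR : 0 < R)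
    (hL : 0 < L) (hC : 0 < C) :
    -- (a) energy decay: `dH_d/dt = −k_d χ₁²/L² − χ₂²/(RC²) ≤ 0`
    (∀ c1 c2 c3 : ℝ → ℝ, IsSol13 kd ki R L C c1 c2 c3 → ∀ t,
      HasDerivAt (fun s => Hd L C ki (c1 s) (c2 s) (c3 s))
        (-kd * (c1 t) ^ 2 / L ^ 2 - (c2 t) ^ 2 / (R * C ^ 2)) t ∧
      -kd * (c1 t) ^ 2 / L ^ 2 - (c2 t) ^ 2 / (R * C ^ 2) ≤ 0) ∧
    -- (b) the largest invariant set contained in `{χ₁ = χ₂ = 0}` is `{0}`: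
    -- any solution remaining in that set is identically zero
    (∀ c1 c2 c3 : ℝ → ℝ, IsSol13 kd ki R L C c1 c2 c3 →
      (∀ t, c1 t = 0 ∧ c2 t = 0) → ∀ t, c1 t = 0 ∧ c2 t = 0 ∧ c3 t = 0) ∧
    -- LaSalle conclusion: the origin is globally asymptotically stable
    (∀ ε > 0, ∃ δ > 0, ∀ c1 c2 c3 : ℝ → ℝ, IsSol13 kd ki R L C c1 c2 c3 →
      ‖(c1 0, c2 0, c3 0)‖ < δ → ∀ t ≥ 0, ‖(c1 t, c2 t, c3 t)‖ < ε) ∧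
    (∀ c1 c2 c3 : ℝ → ℝ, IsSol13 kd ki R L C c1 c2 c3 →
      Tendsto (fun t => (c1 t, c2 t, c3 t)) atTop (nhds (0, 0, 0))) := by
  refine ⟨?_, ?_, ?_, ?_⟩
  · -- part (a)
    intro c1 c2 c3 hsol t
    refine ⟨hd_deriv hki.ne' hL.ne' hR.ne' hC.ne' hsol t, ?_⟩
    have h1 : 0 ≤ kd * (c1 t) ^ 2 / L ^ 2 := by positivity
    have h2 : 0 ≤ (c2 t) ^ 2 / (R * C ^ 2) := by positivity
    have e : -kd * (c1 t) ^ 2 / L ^ 2 = -(kd * (c1 t) ^ 2 / L ^ 2) := by ring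
    linarith [e.ge, e.le]
  · -- part (b)
    intro c1 c2 c3 ⟨h1, h2, h3⟩ hz t
    obtain ⟨e1, e2⟩ := hz t
    refine ⟨e1, e2, ?_⟩
    have hc : c2 = fun _ => (0 : ℝ) := funext fun s => (hz s).2
    have hder : HasDerivAt c2 0 t := by rw [hc]; exact hasDerivAt_const t 0
    have := (h2 t).unique hder
    rw [e1, e2] at this
    field_simp at this
    have hLRC : L * R * C * c3 t = 0 := by linarith [this]
    rcases mul_eq_zero.mp hLRC with h | h
    · exact absurd h (by positivity)
    · exact h
  · -- part (c): Lyapunov stability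
    intro ε hε
    set m := min L (min C ki) with hm
    set M := max L (max C ki) with hM
    have hmpos : 0 < m := lt_min hL (lt_min hC hki)
    have hMpos : 0 < M := lt_of_lt_of_le hL (le_max_left _ _)
    have hmM : m ≤ M := le_trans (min_le_left _ _) (le_max_left _ _)
    refine ⟨ε * Real.sqrt (m / (3 * M)), by positivity, ?_⟩
    intro c1 c2 c3 hsol hδ t ht
    have hV : ∀ s, HasDerivAt (fun u => Hd L C ki (c1 u) (c2 u) (c3 u))
        (-kd * (c1 s) ^ 2 / L ^ 2 - (c2 s) ^ 2 / (R * C ^ 2)) s :=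
      fun s => hd_deriv hki.ne' hL.ne' hR.ne' hC.ne' hsol s
    have hanti : Antitone (fun u => Hd L C ki (c1 u) (c2 u) (c3 u)) := by
      apply antitone_of_hasDerivAt_nonpos hV
      intro s
      have h1 : 0 ≤ kd * (c1 s) ^ 2 / L ^ 2 := by positivity
      have h2 : 0 ≤ (c2 s) ^ 2 / (R * C ^ 2) := by positivity
      simp only [Pi.zero_apply]
      have e : -kd * (c1 s) ^ 2 / L ^ 2 = -(kd * (c1 s) ^ 2 / L ^ 2) := by ring
      linarith [e.ge, e.le]
    have hVt : Hd L C ki (c1 t) (c2 t) (c3 t) ≤ Hd L C ki (c1 0) (c2 0) (c3 0) := hanti ht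
    -- bounds
    have hub : ∀ x y z : ℝ, x ^ 2 + y ^ 2 + z ^ 2 ≤ 2 * M * Hd L C ki x y z := by
      intro x y z
      have hx : x ^ 2 / M ≤ x ^ 2 / L := by gcongr; exact le_max_left _ _
      have hy : y ^ 2 / M ≤ y ^ 2 / C := by gcongr; exact le_trans (le_max_left _ _) (le_max_right _ _)
      have hzz : z ^ 2 / M ≤ z ^ 2 / ki := by gcongr; exact le_trans (le_max_right _ _) (le_max_right _ _)
      have : (x ^ 2 + y ^ 2 + z ^ 2) / M ≤ 2 * Hd L C ki x y z := by
        unfold Hd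
        rw [show (x ^ 2 + y ^ 2 + z ^ 2) / M = x ^ 2 / M + y ^ 2 / M + z ^ 2 / M by ring,
          show (2 : ℝ) * ((x ^ 2 / L + y ^ 2 / C + z ^ 2 / ki) / 2) = x ^ 2 / L + y ^ 2 / C + z ^ 2 / ki by ring]
        linarith
      calc x ^ 2 + y ^ 2 + z ^ 2 = M * ((x ^ 2 + y ^ 2 + z ^ 2) / M) := by field_simp
        _ ≤ M * (2 * Hd L C ki x y z) := by apply mul_le_mul_of_nonneg_left this hMpos.le
        _ = 2 * M * Hd L C ki x y z := by ring
    have hlb : ∀ x y z : ℝ, 2 * m * Hd L C ki x y z ≤ x ^ 2 + y ^ 2 + z ^ 2 := by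
      intro x y z
      have hx : x ^ 2 / L ≤ x ^ 2 / m := by gcongr; exact min_le_left _ _
      have hy : y ^ 2 / C ≤ y ^ 2 / m := by gcongr; exact le_trans (min_le_right _ _) (min_le_left _ _)
      have hzz : z ^ 2 / ki ≤ z ^ 2 / m := by gcongr; exact le_trans (min_le_right _ _) (min_le_right _ _)
      have h2 : 2 * Hd L C ki x y z ≤ (x ^ 2 + y ^ 2 + z ^ 2) / m := by
        unfold Hd
        rw [show (x ^ 2 + y ^ 2 + z ^ 2) / m = x ^ 2 / m + y ^ 2 / m + z ^ 2 / m by ring,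
          show (2 : ℝ) * ((x ^ 2 / L + y ^ 2 / C + z ^ 2 / ki) / 2) = x ^ 2 / L + y ^ 2 / C + z ^ 2 / ki by ring]
        linarith
      calc 2 * m * Hd L C ki x y z = m * (2 * Hd L C ki x y z) := by ring
        _ ≤ m * ((x ^ 2 + y ^ 2 + z ^ 2) / m) := mul_le_mul_of_nonneg_left h2 hmpos.le
        _ = x ^ 2 + y ^ 2 + z ^ 2 := by field_simp
    obtain ⟨q1, q2, q3⟩ := comp_sq_le_norm3 (c1 0) (c2 0) (c3 0)
    have hδsq : ‖(c1 0, c2 0, c3 0)‖ ^ 2 < (ε * Real.sqrt (m / (3 * M))) ^ 2 := by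
      exact pow_lt_pow_left₀ hδ (norm_nonneg _) (by norm_num)
    have hsqrt : (Real.sqrt (m / (3 * M))) ^ 2 = m / (3 * M) := Real.sq_sqrt (by positivity)
    have key : ‖(c1 t, c2 t, c3 t)‖ ^ 2 < ε ^ 2 := by
      have b1 : ‖(c1 t, c2 t, c3 t)‖ ^ 2 ≤ (c1 t) ^ 2 + (c2 t) ^ 2 + (c3 t) ^ 2 :=
        norm3_sq_le _ _ _
      have b2 : (c1 t) ^ 2 + (c2 t) ^ 2 + (c3 t) ^ 2 ≤ 2 * M * Hd L C ki (c1 t) (c2 t) (c3 t) :=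
        hub _ _ _
      have b3 : 2 * M * Hd L C ki (c1 t) (c2 t) (c3 t) ≤ 2 * M * Hd L C ki (c1 0) (c2 0) (c3 0) :=
        mul_le_mul_of_nonneg_left hVt (by positivity)
      have b4 : 2 * m * Hd L C ki (c1 0) (c2 0) (c3 0) ≤ (c1 0) ^ 2 + (c2 0) ^ 2 + (c3 0) ^ 2 :=
        hlb _ _ _
      have b5 : (c1 0) ^ 2 + (c2 0) ^ 2 + (c3 0) ^ 2 ≤ 3 * ‖(c1 0, c2 0, c3 0)‖ ^ 2 := by
        linarith
      have b6 : 2 * M * Hd L C ki (c1 0) (c2 0) (c3 0)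
          = (M / m) * (2 * m * Hd L C ki (c1 0) (c2 0) (c3 0)) := by
        rw [div_mul_eq_mul_div, eq_div_iff hmpos.ne']; ring
      have hHd0 : 0 ≤ Hd L C ki (c1 0) (c2 0) (c3 0) := by unfold Hd; positivity
      have b7 : (M / m) * (2 * m * Hd L C ki (c1 0) (c2 0) (c3 0))
          ≤ (M / m) * (3 * ‖(c1 0, c2 0, c3 0)‖ ^ 2) :=
        mul_le_mul_of_nonneg_left (by linarith) (by positivity)
      have b8 : (M / m) * (3 * ‖(c1 0, c2 0, c3 0)‖ ^ 2)
          < (M / m) * (3 * (ε ^ 2 * (m / (3 * M)))) := by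
        apply mul_lt_mul_of_pos_left _ (by positivity)
        have : (ε * Real.sqrt (m / (3 * M))) ^ 2 = ε ^ 2 * (m / (3 * M)) := by
          rw [mul_pow, hsqrt]
        apply mul_lt_mul_of_pos_left _ (by norm_num)
        rw [← this]; exact hδsq
      have b9 : (M / m) * (3 * (ε ^ 2 * (m / (3 * M)))) = ε ^ 2 := by field_simp
      linarith
    nlinarith [norm_nonneg (c1 t, c2 t, c3 t)]
  · -- (d) global attractivity via strict Lyapunov function
    intro c1 c2 c3 hsol
    obtain ⟨h1, h2, h3⟩ := hsol
    have hHder : ∀ t, HasDerivAt (fun s => Hd L C ki (c1 s) (c2 s) (c3 s))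
        (-kd * (c1 t) ^ 2 / L ^ 2 - (c2 t) ^ 2 / (R * C ^ 2)) t :=
      fun t => hd_deriv hki.ne' hL.ne' hR.ne' hC.ne' ⟨h1, h2, h3⟩ t
    set a := kd / L ^ 2 with ha
    set b := 1 / (R * C ^ 2) with hb
    have hapos : 0 < a := by positivity
    have hbpos : 0 < b := by positivity
    set S : ℝ := 1 / (R ^ 2 * C ^ 2) + ki / C with hS
    have hSpos : 0 < S := by positivity
    set ε : ℝ := min (min (a * L ^ 2 / 2) (b / (2 * S))) (min (1 / (4 * C)) (1 / (4 * ki)))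
      with hεdef
    have hεpos : 0 < ε := by positivity
    have hε1 : ε ≤ a * L ^ 2 / 2 := le_trans (min_le_left _ _) (min_le_left _ _)
    have hε2 : ε * S ≤ b / 2 := by
      have h : ε ≤ b / (2 * S) := le_trans (min_le_left _ _) (min_le_right _ _)
      calc ε * S ≤ b / (2 * S) * S := mul_le_mul_of_nonneg_right h hSpos.le
        _ = b / 2 := by field_simp
    have hε3 : ε ≤ 1 / (4 * C) := le_trans (min_le_right _ _) (min_le_left _ _)
    have hε4 : ε ≤ 1 / (4 * ki) := le_trans (min_le_right _ _) (min_le_right _ _)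
    clear_value ε
    clear_value S
    clear_value b
    clear_value a
    set W : ℝ → ℝ := fun t => Hd L C ki (c1 t) (c2 t) (c3 t) + ε * (c2 t * c3 t) with hWdef
    set D : ℝ → ℝ := fun t => (-kd * (c1 t) ^ 2 / L ^ 2 - (c2 t) ^ 2 / (R * C ^ 2))
      + ε * ((c1 t / L - (1 / R) * (c2 t / C) - ki * (c3 t / ki)) * c3 t
        + c2 t * (ki * (c2 t / C))) with hDdef
    have hWder : ∀ t, HasDerivAt W (D t) t := fun t =>
      (hHder t).add (((h2 t).mul (h3 t)).const_mul ε)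
    clear_value W
    clear_value D
    have hkey : ∀ t, D t ≤ -(a / 2) * (c1 t) ^ 2 - (b / 2) * (c2 t) ^ 2
        - (ε / 2) * (c3 t) ^ 2 := by
      intro t
      set x := c1 t with hx
      set y := c2 t with hy
      set z := c3 t with hzz
      have hDexp : D t = -(a * x ^ 2) - b * y ^ 2
          + (ε * (x / L * z) + ε * (-(y / (R * C) * z)) - ε * z ^ 2
            + ε * (ki * y ^ 2 / C)) := by
        have hz0 : ki * (z / ki) = z := by field_simp
        simp only [hDdef, ha, hb, ← hx, ← hy, ← hzz]
        rw [hz0]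
        ring
      have s1 : ε * (x / L * z) ≤ ε * (z ^ 2 / 4) + ε * (x / L) ^ 2 := by
        nlinarith [mul_nonneg hεpos.le (sq_nonneg (z / 2 - x / L))]
      have s2 : ε * (-(y / (R * C) * z)) ≤ ε * (z ^ 2 / 4) + ε * (y / (R * C)) ^ 2 := by
        nlinarith [mul_nonneg hεpos.le (sq_nonneg (z / 2 + y / (R * C)))]
      have e3 : ε * (x / L) ^ 2 ≤ a / 2 * x ^ 2 := by
        calc ε * (x / L) ^ 2 ≤ a * L ^ 2 / 2 * (x / L) ^ 2 :=
              mul_le_mul_of_nonneg_right hε1 (sq_nonneg _)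
          _ = a / 2 * x ^ 2 := by field_simp
      have e4 : ε * (y / (R * C)) ^ 2 + ε * (ki * y ^ 2 / C) ≤ b / 2 * y ^ 2 := by
        have h := mul_le_mul_of_nonneg_right hε2 (sq_nonneg y)
        calc ε * (y / (R * C)) ^ 2 + ε * (ki * y ^ 2 / C) = ε * S * y ^ 2 := by
              simp only [hS]; field_simp
          _ ≤ b / 2 * y ^ 2 := h
      rw [hDexp]
      linarith
    have h3' : ε * C ≤ 1 / 4 := by
      calc ε * C ≤ 1 / (4 * C) * C := mul_le_mul_of_nonneg_right hε3 hC.le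
        _ = 1 / 4 := by field_simp
    have h4' : ε * ki ≤ 1 / 4 := by
      calc ε * ki ≤ 1 / (4 * ki) * ki := mul_le_mul_of_nonneg_right hε4 hki.le
        _ = 1 / 4 := by field_simp
    have hWnonneg : ∀ t, 0 ≤ W t := by
      intro t
      apply le_by_num (N := 4 * C * ki * (c1 t) ^ 2 + 4 * L * ki * (c2 t) ^ 2
        + 4 * L * C * (c3 t) ^ 2 + 8 * L * C * ki * (ε * (c2 t * c3 t)))
        (d := 8 * L * C * ki) (by positivity) ?_ ?_
      · nlinarith [mul_nonneg (mul_nonneg (mul_nonneg (mul_nonneg hL.le hC.le) hki.le) hεpos.le)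
          (sq_nonneg (c2 t + c3 t)),
          mul_le_mul_of_nonneg_right h3' (by positivity : (0:ℝ) ≤ 4 * L * ki * (c2 t) ^ 2),
          mul_le_mul_of_nonneg_right h4' (by positivity : (0:ℝ) ≤ 4 * L * C * (c3 t) ^ 2),
          mul_nonneg (mul_nonneg (mul_nonneg hC.le hki.le) hL.le) (sq_nonneg (c1 t)),
          mul_nonneg (mul_nonneg hL.le hki.le) (sq_nonneg (c2 t)),
          mul_nonneg (mul_nonneg hL.le hC.le) (sq_nonneg (c3 t))]
      · simp only [hWdef, Hd]
        field_simp
        ring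
    have hcomp1 : ∀ t, (c1 t) ^ 2 ≤ 2 * L * W t := by
      intro t
      apply le_by_num (N := 4 * L * ki * (c2 t) ^ 2 + 4 * L * C * (c3 t) ^ 2
        + 8 * L * C * ki * (ε * (c2 t * c3 t))) (d := 4 * C * ki) (by positivity) ?_ ?_
      · nlinarith [mul_nonneg (mul_nonneg (mul_nonneg (mul_nonneg hL.le hC.le) hki.le) hεpos.le)
          (sq_nonneg (c2 t + c3 t)),
          mul_le_mul_of_nonneg_right h3' (by positivity : (0:ℝ) ≤ 4 * L * ki * (c2 t) ^ 2),
          mul_le_mul_of_nonneg_right h4' (by positivity : (0:ℝ) ≤ 4 * L * C * (c3 t) ^ 2),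
          mul_nonneg (mul_nonneg hL.le hki.le) (sq_nonneg (c2 t)),
          mul_nonneg (mul_nonneg hL.le hC.le) (sq_nonneg (c3 t))]
      · simp only [hWdef, Hd]
        field_simp
        ring
    have hcomp2 : ∀ t, (c2 t) ^ 2 ≤ 4 * C * W t := by
      intro t
      apply le_by_num (N := 2 * C * ki * (c1 t) ^ 2 + L * ki * (c2 t) ^ 2
        + 2 * L * C * (c3 t) ^ 2 + 4 * L * C * ki * (ε * (c2 t * c3 t)))
        (d := L * ki) (by positivity) ?_ ?_
      · nlinarith [mul_nonneg (mul_nonneg (mul_nonneg (mul_nonneg hL.le hC.le) hki.le) hεpos.le)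
          (sq_nonneg (c2 t + c3 t)),
          mul_le_mul_of_nonneg_right h3' (by positivity : (0:ℝ) ≤ 2 * L * ki * (c2 t) ^ 2),
          mul_le_mul_of_nonneg_right h4' (by positivity : (0:ℝ) ≤ 2 * L * C * (c3 t) ^ 2),
          mul_nonneg (mul_nonneg (mul_nonneg hC.le hki.le) hL.le) (sq_nonneg (c1 t)),
          mul_nonneg (mul_nonneg hL.le hki.le) (sq_nonneg (c2 t)),
          mul_nonneg (mul_nonneg hL.le hC.le) (sq_nonneg (c3 t))]
      · simp only [hWdef, Hd]
        field_simp
        ring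
    have hcomp3 : ∀ t, (c3 t) ^ 2 ≤ 4 * ki * W t := by
      intro t
      apply le_by_num (N := 2 * C * ki * (c1 t) ^ 2 + 2 * L * ki * (c2 t) ^ 2
        + L * C * (c3 t) ^ 2 + 4 * L * C * ki * (ε * (c2 t * c3 t)))
        (d := L * C) (by positivity) ?_ ?_
      · nlinarith [mul_nonneg (mul_nonneg (mul_nonneg (mul_nonneg hL.le hC.le) hki.le) hεpos.le)
          (sq_nonneg (c2 t + c3 t)),
          mul_le_mul_of_nonneg_right h3' (by positivity : (0:ℝ) ≤ 2 * L * ki * (c2 t) ^ 2),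
          mul_le_mul_of_nonneg_right h4' (by positivity : (0:ℝ) ≤ 2 * L * C * (c3 t) ^ 2),
          mul_nonneg (mul_nonneg (mul_nonneg hC.le hki.le) hL.le) (sq_nonneg (c1 t)),
          mul_nonneg (mul_nonneg hL.le hki.le) (sq_nonneg (c2 t)),
          mul_nonneg (mul_nonneg hL.le hC.le) (sq_nonneg (c3 t))]
      · simp only [hWdef, Hd]
        field_simp
        ring
    have hWup : ∀ t, W t ≤ 1 / (2 * L) * (c1 t) ^ 2 + 5 / (8 * C) * (c2 t) ^ 2
        + 5 / (8 * ki) * (c3 t) ^ 2 := by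
      intro t
      apply le_by_num (N := L * ki * (c2 t) ^ 2 + L * C * (c3 t) ^ 2
        - 8 * L * C * ki * (ε * (c2 t * c3 t))) (d := 8 * L * C * ki) (by positivity) ?_ ?_
      · nlinarith [mul_nonneg (mul_nonneg (mul_nonneg (mul_nonneg hL.le hC.le) hki.le) hεpos.le)
          (sq_nonneg (c2 t - c3 t)),
          mul_le_mul_of_nonneg_right h3' (by positivity : (0:ℝ) ≤ 4 * L * ki * (c2 t) ^ 2),
          mul_le_mul_of_nonneg_right h4' (by positivity : (0:ℝ) ≤ 4 * L * C * (c3 t) ^ 2)]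
      · simp only [hWdef, Hd]
        field_simp
        ring
    set α := min (min (a * L) (4 * b * C / 5)) (4 * ε * ki / 5) with hαdef
    have hαpos : 0 < α := by positivity
    have hα1 : α ≤ a * L := le_trans (min_le_left _ _) (min_le_left _ _)
    have hα2 : α ≤ 4 * b * C / 5 := le_trans (min_le_left _ _) (min_le_right _ _)
    have hα3 : α ≤ 4 * ε * ki / 5 := min_le_right _ _
    clear_value α
    have hαW : ∀ t, α * W t ≤ a / 2 * (c1 t) ^ 2 + b / 2 * (c2 t) ^ 2
        + ε / 2 * (c3 t) ^ 2 := by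
      intro t
      refine le_trans (mul_le_mul_of_nonneg_left (hWup t) hαpos.le) ?_
      apply le_by_num (N := 4 * C * ki * (a * L - α) * (c1 t) ^ 2
        + L * ki * (4 * b * C - 5 * α) * (c2 t) ^ 2
        + L * C * (4 * ε * ki - 5 * α) * (c3 t) ^ 2) (d := 8 * L * C * ki) (by positivity) ?_ ?_
      · have k1 : 0 ≤ a * L - α := by linarith
        have k2 : 0 ≤ 4 * b * C - 5 * α := by linarith
        have k3 : 0 ≤ 4 * ε * ki - 5 * α := by linarith
        have m1 : (0:ℝ) ≤ 4 * C * ki * (a * L - α) * (c1 t) ^ 2 := by positivity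
        have m2 : (0:ℝ) ≤ L * ki * (4 * b * C - 5 * α) * (c2 t) ^ 2 := by positivity
        have m3 : (0:ℝ) ≤ L * C * (4 * ε * ki - 5 * α) * (c3 t) ^ 2 := by positivity
        linarith
      · field_simp
        ring
    have hdecay : ∀ t, α * W t + D t ≤ 0 := fun t => by linarith [hkey t, hαW t]
    set G : ℝ → ℝ := fun t => Real.exp (α * t) * W t with hGdef
    have hGder : ∀ t, HasDerivAt G (Real.exp (α * t) * (α * W t + D t)) t := by
      intro t
      have he : HasDerivAt (fun s => Real.exp (α * s)) (α * Real.exp (α * t)) t := by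
        have h := (Real.hasDerivAt_exp (α * t)).comp t ((hasDerivAt_id t).const_mul α)
        simpa [mul_comm, Function.comp_def] using h
      have h := he.mul (hWder t)
      exact h.congr_deriv (by ring)
    clear_value G
    have hGanti : Antitone G := by
      apply antitone_of_hasDerivAt_nonpos hGder
      intro t
      have := hdecay t
      have hex := Real.exp_pos (α * t)
      simp only [Pi.zero_apply]
      nlinarith
    have hW0 : 0 ≤ W 0 := hWnonneg 0
    have hWbound : ∀ t ≥ 0, W t ≤ Real.exp (-(α * t)) * W 0 := by
      intro t ht
      have hg : Real.exp (α * t) * W t ≤ W 0 := by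
        have hg0 : G t ≤ G 0 := hGanti ht
        simp only [hGdef] at hg0
        simpa using hg0
      have hex := Real.exp_pos (α * t)
      have : Real.exp (-(α * t)) * (Real.exp (α * t) * W t) ≤ Real.exp (-(α * t)) * W 0 :=
        mul_le_mul_of_nonneg_left hg (Real.exp_pos _).le
      calc W t = Real.exp (-(α * t)) * (Real.exp (α * t) * W t) := by
            rw [← mul_assoc, ← Real.exp_add]; simp
        _ ≤ Real.exp (-(α * t)) * W 0 := this
    have hexp0 : Tendsto (fun t => Real.exp (-(α * t))) atTop (nhds 0) := by
      have h0 : Tendsto (fun t : ℝ => α * t) atTop atTop :=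
        tendsto_id.const_mul_atTop hαpos
      have h := Real.tendsto_exp_neg_atTop_nhds_zero.comp h0
      exact h.congr fun t => by simp [Function.comp]
    have hsq : ∀ (c : ℝ → ℝ) (K : ℝ), 0 ≤ K →
        (∀ t, (c t) ^ 2 ≤ K * W t) → Tendsto c atTop (nhds 0) := by
      intro c K hK hcb
      have hc2 : Tendsto (fun t => (c t) ^ 2) atTop (nhds 0) := by
        apply squeeze_zero' (Filter.Eventually.of_forall fun t => sq_nonneg _)
        · filter_upwards [eventually_ge_atTop (0 : ℝ)] with t ht
          show (c t) ^ 2 ≤ K * W 0 * Real.exp (-(α * t))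
          have hb1 := hcb t
          have hb2 := mul_le_mul_of_nonneg_left (hWbound t ht) hK
          calc (c t) ^ 2 ≤ K * W t := hb1
            _ ≤ K * (Real.exp (-(α * t)) * W 0) := hb2
            _ = K * W 0 * Real.exp (-(α * t)) := by ring
        · have h := hexp0.const_mul (K * W 0)
          simpa [mul_comm] using h
      have habs : Tendsto (fun t => |c t|) atTop (nhds 0) := by
        have h := (Real.continuous_sqrt.tendsto 0).comp hc2
        simp only [Function.comp_def, Real.sqrt_zero, Real.sqrt_sq_eq_abs] at h
        exact h
      have hneg : Tendsto (fun t => -|c t|) atTop (nhds 0) := by simpa using habs.neg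
      exact tendsto_of_tendsto_of_tendsto_of_le_of_le hneg habs
        (fun t => neg_abs_le _) (fun t => le_abs_self _)
    have hc1 : Tendsto c1 atTop (nhds 0) := hsq c1 (2 * L) (by positivity) hcomp1
    have hc2t : Tendsto c2 atTop (nhds 0) := hsq c2 (4 * C) (by positivity) hcomp2
    have hc3t : Tendsto c3 atTop (nhds 0) := hsq c3 (4 * ki) (by positivity) hcomp3
    exact hc1.prodMk_nhds (hc2t.prodMk_nhds hc3t)
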